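/- SGD with SPS under interpolation, strongly convex case: if f_i are convex and L_i-smooth with f_i(x*) = f_i* for all i (interpolation) and f is μ-strongly convex, then SGD with step-size γ_k = 2(f_i(x^k) − f_i*)/‖∇f_i(x^k)‖² (i.e., SPS with c = 1/2) satisfies E‖x^k − x*‖² ≤ (1 − μ/L_max)^k ‖x^0 − x*‖². -/

import Mathlib

open scoped RealInnerProductSpace

lemma sps_line_deriv {d : ℕ} (g : EuclideanSpace ℝ (Fin d) → ℝ)
    (Gg : EuclideanSpace ℝ (Fin d) → EuclideanSpace ℝ (Fin d))
    (hg : ∀ x, HasGradientAt g (Gg x) x) (x v : EuclideanSpace ℝ (Fin d)) (t : ℝ) :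
    HasDerivAt (fun t : ℝ => g (x + t • v)) ⟪Gg (x + t • v), v⟫ t := by
  have hc : HasDerivAt (fun t : ℝ => x + t • v) v t := by
    simpa using ((hasDerivAt_id t).smul_const v).const_add x
  have := ((hg (x + t • v)).hasFDerivAt).comp_hasDerivAt t hc
  simp only [InnerProductSpace.toDual_apply_apply] at this; exact this

lemma sps_descent {d : ℕ} (g : EuclideanSpace ℝ (Fin d) → ℝ)
    (Gg : EuclideanSpace ℝ (Fin d) → EuclideanSpace ℝ (Fin d))
    (hg : ∀ x, HasGradientAt g (Gg x) x) {L : ℝ}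
    (hlip : ∀ x y, ‖Gg x - Gg y‖ ≤ L * ‖x - y‖) (x y : EuclideanSpace ℝ (Fin d)) :
    g y ≤ g x + ⟪Gg x, y - x⟫ + L / 2 * ‖y - x‖ ^ 2 := by
  set v := y - x with hv
  set φ : ℝ → ℝ := fun t => g (x + t • v) - t * ⟪Gg x, v⟫ - L / 2 * t ^ 2 * ‖v‖ ^ 2 with hφ
  have hφ' : ∀ t : ℝ, HasDerivAt φ (⟪Gg (x + t • v), v⟫ - ⟪Gg x, v⟫ - L * t * ‖v‖ ^ 2) t := by
    intro t
    have h1 := sps_line_deriv g Gg hg x v t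
    have h2 : HasDerivAt (fun t : ℝ => t * ⟪Gg x, v⟫) ⟪Gg x, v⟫ t := by
      simpa using (hasDerivAt_id t).mul_const ⟪Gg x, v⟫
    have h3 : HasDerivAt (fun t : ℝ => L / 2 * t ^ 2 * ‖v‖ ^ 2)
        (L * t * ‖v‖ ^ 2) t := by
      have := ((hasDerivAt_pow 2 t).const_mul (L / 2)).mul_const (‖v‖ ^ 2)
      exact this.congr_deriv (by ring)
    exact (h1.sub h2).sub h3
  have hanti : AntitoneOn φ (Set.Icc (0:ℝ) 1) := by
    apply antitoneOn_of_deriv_nonpos (convex_Icc 0 1)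
    · exact fun t _ => ((hφ' t).continuousAt).continuousWithinAt
    · exact fun t _ => ((hφ' t).differentiableAt).differentiableWithinAt
    · intro t ht
      rw [interior_Icc] at ht
      rw [(hφ' t).deriv]
      have h1 : ⟪Gg (x + t • v), v⟫ - ⟪Gg x, v⟫ = ⟪Gg (x + t • v) - Gg x, v⟫ := by
        rw [inner_sub_left]
      have h2 : ⟪Gg (x + t • v) - Gg x, v⟫ ≤ ‖Gg (x + t • v) - Gg x‖ * ‖v‖ :=
        real_inner_le_norm _ _
      have h3 : ‖Gg (x + t • v) - Gg x‖ ≤ L * (t * ‖v‖) := by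
        have := hlip (x + t • v) x
        simpa [norm_smul, abs_of_nonneg ht.1.le] using this
      nlinarith [norm_nonneg v, ht.1]
  have h01 := hanti (Set.left_mem_Icc.2 zero_le_one) (Set.right_mem_Icc.2 zero_le_one) zero_le_one
  simp only [hφ, zero_smul, add_zero, one_smul, zero_pow, one_pow, mul_zero, zero_mul,
    mul_one, sub_zero] at h01
  have hxy : x + v = y := by rw [hv]; abel
  rw [hxy] at h01
  linarith

lemma sps_cocoer {d : ℕ} (g : EuclideanSpace ℝ (Fin d) → ℝ)
    (Gg : EuclideanSpace ℝ (Fin d) → EuclideanSpace ℝ (Fin d))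
    {L : ℝ} (hL : 0 < L) {s : ℝ}
    (hs : IsGLB (Set.range g) s) (x : EuclideanSpace ℝ (Fin d))
    (hdesc : ∀ x y, g y ≤ g x + ⟪Gg x, y - x⟫ + L / 2 * ‖y - x‖ ^ 2) :
    ‖Gg x‖ ^ 2 / (2 * L) ≤ g x - s := by
  set y := x - L⁻¹ • Gg x with hy
  have h1 := hdesc x y
  have h2 : y - x = -(L⁻¹ • Gg x) := by rw [hy]; abel
  rw [h2] at h1
  have h3 : ⟪Gg x, -(L⁻¹ • Gg x)⟫ = -(L⁻¹ * ‖Gg x‖ ^ 2) := by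
    rw [inner_neg_right, real_inner_smul_right, real_inner_self_eq_norm_sq]
  have h4 : ‖-(L⁻¹ • Gg x)‖ ^ 2 = L⁻¹ ^ 2 * ‖Gg x‖ ^ 2 := by
    rw [norm_neg, norm_smul]
    simp [abs_of_pos hL, mul_pow]
  rw [h3, h4] at h1
  have h5 : s ≤ g y := hs.1 (Set.mem_range_self y)
  have hL' : L ≠ 0 := hL.ne'
  have key : -(L⁻¹ * ‖Gg x‖ ^ 2) + L / 2 * (L⁻¹ ^ 2 * ‖Gg x‖ ^ 2)
      = -(‖Gg x‖ ^ 2 / (2 * L)) := by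
    field_simp; ring
  linarith [h1, h5, key]

lemma sps_step_ineq {d : ℕ} (g : EuclideanSpace ℝ (Fin d) → ℝ)
    (Gg : EuclideanSpace ℝ (Fin d) → EuclideanSpace ℝ (Fin d))
    (hconv : ∀ x y, g y ≥ g x + ⟪Gg x, y - x⟫)
    {L : ℝ} (hL : 0 < L) {s : ℝ}
    (hs : IsGLB (Set.range g) s)
    (xstar : EuclideanSpace ℝ (Fin d)) (hxs : g xstar = s)
    {Lmax : ℝ} (hLm : L ≤ Lmax) (hLmax : 0 < Lmax)
    (x : EuclideanSpace ℝ (Fin d))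
    (hco : ‖Gg x‖ ^ 2 / (2 * L) ≤ g x - s) :
    ‖x - (2 * (g x - s) / ‖Gg x‖ ^ 2) • Gg x - xstar‖ ^ 2
      ≤ ‖x - xstar‖ ^ 2 - 2 / Lmax * (⟪Gg x, x - xstar⟫ - (g x - s)) := by
  set γ := 2 * (g x - s) / ‖Gg x‖ ^ 2 with hγ
  set a := x - xstar with ha
  set b := Gg x with hb
  have hrw : x - γ • b - xstar = a - γ • b := by rw [ha]; abel
  rw [hrw, norm_sub_sq_real]
  have hinner : ⟪a, γ • b⟫ = γ * ⟪b, a⟫ := by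
    rw [real_inner_smul_right, real_inner_comm]
  have hnorm : ‖γ • b‖ ^ 2 = γ ^ 2 * ‖b‖ ^ 2 := by
    rw [norm_smul]; rw [mul_pow]; simp [sq_abs]
  rw [hinner, hnorm]
  have hbr : g x - s ≤ ⟪b, a⟫ := by
    have h := hconv x xstar
    have h2 : ⟪b, xstar - x⟫ = -⟪b, a⟫ := by
      rw [ha, ← inner_neg_right]; congr 1; abel
    rw [h2, hxs] at h
    linarith
  by_cases hb0 : b = 0
  · have hbz : Gg x = 0 := hb0
    have hg0 : g x = s := by
      have hlb : ∀ y, g x ≤ g y := by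
        intro y
        have h := hconv x y
        rw [hbz, inner_zero_left] at h
        linarith
      have h1 : g x ∈ lowerBounds (Set.range g) := by
        rintro _ ⟨y, rfl⟩; exact hlb y
      exact le_antisymm (hs.2 h1) (hs.1 (Set.mem_range_self x))
    simp [hγ, hb0, hg0]
  · have hbn : 0 < ‖b‖ := norm_pos_iff.2 hb0
    have hb2 : 0 < ‖b‖ ^ 2 := by positivity
    have hγval : γ * ‖b‖ ^ 2 = 2 * (g x - s) := by
      rw [hγ]; field_simp
    have hco2 : ‖b‖ ^ 2 ≤ (g x - s) * (2 * L) := by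
      rwa [div_le_iff₀ (by positivity)] at hco
    have hgs : 0 < g x - s := by nlinarith
    have hγge : 1 / Lmax ≤ γ := by
      rw [hγ, div_le_div_iff₀ hLmax hb2]
      nlinarith [mul_le_mul_of_nonneg_left hLm (le_of_lt hgs)]
    have hbrpos : 0 ≤ ⟪b, a⟫ - (g x - s) := by linarith
    have hγsq : γ ^ 2 * ‖b‖ ^ 2 = γ * (2 * (g x - s)) := by
      rw [sq, mul_assoc, hγval]
    rw [hγsq]
    have h2Lm : 2 / Lmax = 2 * (1 / Lmax) := by ring
    nlinarith [mul_nonneg (sub_nonneg.2 hγge) hbrpos, h2Lm]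

/-- SGD with SPS (`c = 1/2`) under interpolation for strongly convex `f`:
`E‖x^k − x*‖² ≤ (1 − μ/L_max)^k ‖x^0 − x*‖²`, where the expectation is over the i.i.d.
uniform indices of the first `k` steps. -/
theorem stmt5 {d n : ℕ} (hn : 0 < n)
    (f : Fin n → EuclideanSpace ℝ (Fin d) → ℝ)
    (G : Fin n → EuclideanSpace ℝ (Fin d) → EuclideanSpace ℝ (Fin d))
    (hgrad : ∀ i x, HasGradientAt (f i) (G i x) x)
    (hconv : ∀ i x y, f i y ≥ f i x + ⟪G i x, y - x⟫)
    (L : Fin n → ℝ) (hL : ∀ i, 0 < L i)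
    (hsmooth : ∀ i x y, ‖G i x - G i y‖ ≤ L i * ‖x - y‖)
    (fstar : Fin n → ℝ) (hfstar : ∀ i, IsGLB (Set.range (f i)) (fstar i))
    (F : EuclideanSpace ℝ (Fin d) → ℝ) (hF : ∀ x, F x = (1 / (n : ℝ)) * ∑ i, f i x)
    (GF : EuclideanSpace ℝ (Fin d) → EuclideanSpace ℝ (Fin d))
    (hGF : ∀ x, HasGradientAt F (GF x) x)
    (μ : ℝ) (hμ : 0 < μ)
    (hsc : ∀ x y, F y ≥ F x + ⟪GF x, y - x⟫ + μ / 2 * ‖y - x‖ ^ 2)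
    (xstar : EuclideanSpace ℝ (Fin d)) (hxstar : ∀ y, F xstar ≤ F y)
    (hinterp : ∀ i, f i xstar = fstar i)
    (Lmax : ℝ) (hLmax : Lmax = Finset.univ.sup' ⟨⟨0, hn⟩, Finset.mem_univ _⟩ L)
    (x0 : EuclideanSpace ℝ (Fin d))
    (Y : (k : ℕ) → (Fin k → Fin n) → EuclideanSpace ℝ (Fin d))
    (hY0 : ∀ ω, Y 0 ω = x0)
    (hYstep : ∀ (k : ℕ) (ω : Fin (k + 1) → Fin n),
      Y (k + 1) ω =
        Y k (fun j => ω j.castSucc) -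
          (2 * (f (ω (Fin.last k)) (Y k (fun j => ω j.castSucc)) -
                fstar (ω (Fin.last k))) /
            ‖G (ω (Fin.last k)) (Y k (fun j => ω j.castSucc))‖ ^ 2) •
            G (ω (Fin.last k)) (Y k (fun j => ω j.castSucc))) :
    ∀ k : ℕ, (1 / (n : ℝ) ^ k) * ∑ ω : Fin k → Fin n, ‖Y k ω - xstar‖ ^ 2 ≤
      (1 - μ / Lmax) ^ k * ‖x0 - xstar‖ ^ 2 := by
  by_cases hx0 : x0 = xstar
  · -- trivial case: start at the optimum
    have hfix : ∀ k (ω : Fin k → Fin n), Y k ω = xstar := by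
      intro k
      induction k with
      | zero => intro ω; rw [hY0, hx0]
      | succ k ih =>
        intro ω
        rw [hYstep, ih]
        simp [hinterp]
    intro k
    simp [hfix, hx0]
  · -- main case
    have hnR : (0:ℝ) < (n:ℝ) := by exact_mod_cast hn
    have hLi : ∀ i, L i ≤ Lmax := by
      intro i
      rw [hLmax]
      exact Finset.le_sup' L (Finset.mem_univ i)
    have hLmaxpos : 0 < Lmax := lt_of_lt_of_le (hL ⟨0, hn⟩) (hLi ⟨0, hn⟩)
    have hdesc : ∀ i x y, f i y ≤ f i x + ⟪G i x, y - x⟫ + L i / 2 * ‖y - x‖ ^ 2 :=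
      fun i => sps_descent (f i) (G i) (hgrad i) (hsmooth i)
    have hco : ∀ i x, ‖G i x‖ ^ 2 / (2 * L i) ≤ f i x - fstar i :=
      fun i x => sps_cocoer (f i) (G i) (hL i) (hfstar i) x (hdesc i)
    -- the gradient of F
    have hGFeq : ∀ x, GF x = (1 / (n : ℝ)) • ∑ i, G i x := by
      intro x
      refine (hGF x).unique ?_
      have hsum : HasFDerivAt (fun y => ∑ i, f i y)
          (∑ i, (InnerProductSpace.toDual ℝ (EuclideanSpace ℝ (Fin d))) (G i x)) x :=
        HasFDerivAt.fun_sum (fun i _ => (hgrad i x).hasFDerivAt)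
      have hmul := hsum.const_mul (1 / (n : ℝ))
      have hFfun : F = fun y => (1 / (n : ℝ)) * ∑ i, f i y := funext hF
      rw [hasGradientAt_iff_hasFDerivAt, hFfun]
      exact hmul.congr_fderiv (by rw [map_smul, map_sum])
    -- GF is Lmax-Lipschitz
    have hGFlip : ∀ x y, ‖GF x - GF y‖ ≤ Lmax * ‖x - y‖ := by
      intro x y
      rw [hGFeq x, hGFeq y, ← smul_sub, ← Finset.sum_sub_distrib]
      rw [norm_smul]
      have h1 : ‖∑ i, (G i x - G i y)‖ ≤ ∑ i : Fin n, (Lmax * ‖x - y‖) := by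
        refine le_trans (norm_sum_le _ _) (Finset.sum_le_sum fun i _ => ?_)
        exact le_trans (hsmooth i x y)
          (mul_le_mul_of_nonneg_right (hLi i) (norm_nonneg _))
      rw [Finset.sum_const, Finset.card_univ, Fintype.card_fin, nsmul_eq_mul] at h1
      have h2 : ‖(1 / (n:ℝ))‖ = 1 / (n:ℝ) := by
        rw [Real.norm_eq_abs, abs_of_pos (by positivity)]
      rw [h2]
      calc 1 / (n:ℝ) * ‖∑ i, (G i x - G i y)‖
          ≤ 1 / (n:ℝ) * ((n:ℝ) * (Lmax * ‖x - y‖)) := by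
            exact mul_le_mul_of_nonneg_left h1 (by positivity)
        _ = Lmax * ‖x - y‖ := by field_simp
    -- μ ≤ Lmax
    have hμLmax : μ ≤ Lmax := by
      have hu : 0 < ‖x0 - xstar‖ := by
        rw [norm_pos_iff]
        intro h
        exact hx0 (sub_eq_zero.1 h)
      have h1 := hsc x0 xstar
      have h2 := hsc xstar x0
      have e1 : ⟪GF x0, xstar - x0⟫ = -⟪GF x0, x0 - xstar⟫ := by
        rw [← inner_neg_right]; congr 1; abel
      have e2 : ⟪GF xstar, x0 - xstar⟫ = ⟪GF xstar, x0 - xstar⟫ := rfl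
      rw [e1] at h1
      have hnorm : ‖xstar - x0‖ = ‖x0 - xstar‖ := norm_sub_rev _ _
      rw [hnorm] at h1
      have hI : μ * ‖x0 - xstar‖ ^ 2 ≤ ⟪GF x0 - GF xstar, x0 - xstar⟫ := by
        rw [inner_sub_left]
        linarith
      have hI2 : ⟪GF x0 - GF xstar, x0 - xstar⟫ ≤ Lmax * ‖x0 - xstar‖ ^ 2 := by
        calc ⟪GF x0 - GF xstar, x0 - xstar⟫ ≤ ‖GF x0 - GF xstar‖ * ‖x0 - xstar‖ :=
              real_inner_le_norm _ _
          _ ≤ Lmax * ‖x0 - xstar‖ * ‖x0 - xstar‖ :=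
              mul_le_mul_of_nonneg_right (hGFlip x0 xstar) (norm_nonneg _)
          _ = Lmax * ‖x0 - xstar‖ ^ 2 := by ring
      have hu2 : 0 < ‖x0 - xstar‖ ^ 2 := by positivity
      nlinarith [hu2]
    have hρ0 : 0 ≤ 1 - μ / Lmax := by
      have : μ / Lmax ≤ 1 := (div_le_one hLmaxpos).2 hμLmax
      linarith
    -- key one-step expectation bound
    have key : ∀ x : EuclideanSpace ℝ (Fin d),
        ∑ i, ‖x - (2 * (f i x - fstar i) / ‖G i x‖ ^ 2) • G i x - xstar‖ ^ 2
          ≤ (n : ℝ) * ((1 - μ / Lmax) * ‖x - xstar‖ ^ 2) := by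
      intro x
      have hstep : ∀ i : Fin n,
          ‖x - (2 * (f i x - fstar i) / ‖G i x‖ ^ 2) • G i x - xstar‖ ^ 2
            ≤ ‖x - xstar‖ ^ 2 - 2 / Lmax * (⟪G i x, x - xstar⟫ - (f i x - fstar i)) :=
        fun i => sps_step_ineq (f i) (G i) (hconv i) (hL i) (hfstar i) xstar (hinterp i)
          (hLi i) hLmaxpos x (hco i x)
      calc ∑ i, ‖x - (2 * (f i x - fstar i) / ‖G i x‖ ^ 2) • G i x - xstar‖ ^ 2
          ≤ ∑ i : Fin n, (‖x - xstar‖ ^ 2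
              - 2 / Lmax * (⟪G i x, x - xstar⟫ - (f i x - fstar i))) :=
            Finset.sum_le_sum fun i _ => hstep i
        _ = (n:ℝ) * ‖x - xstar‖ ^ 2
              - 2 / Lmax * (⟪∑ i, G i x, x - xstar⟫ - (∑ i, f i x - ∑ i, fstar i)) := by
            rw [Finset.sum_sub_distrib, Finset.sum_const, Finset.card_univ, Fintype.card_fin,
              nsmul_eq_mul, ← Finset.mul_sum, Finset.sum_sub_distrib, sum_inner]
            rw [Finset.sum_sub_distrib]
        _ ≤ (n : ℝ) * ((1 - μ / Lmax) * ‖x - xstar‖ ^ 2) := by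
            have hg : ⟪∑ i, G i x, x - xstar⟫ = (n:ℝ) * ⟪GF x, x - xstar⟫ := by
              have : (∑ i, G i x) = (n:ℝ) • GF x := by
                rw [hGFeq x, smul_smul]
                rw [mul_one_div, div_self hnR.ne', one_smul]
              rw [this, real_inner_smul_left]
            have hfx : ∑ i, f i x = (n:ℝ) * F x := by
              rw [hF x]; field_simp
            have hfs : ∑ i, fstar i = (n:ℝ) * F xstar := by
              rw [hF xstar, ← Finset.sum_congr rfl (fun i _ => (hinterp i).symm)]
              field_simp
            rw [hg, hfx, hfs]
            have hsc1 := hsc x xstar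
            have e1 : ⟪GF x, xstar - x⟫ = -⟪GF x, x - xstar⟫ := by
              rw [← inner_neg_right]; congr 1; abel
            rw [e1, norm_sub_rev xstar x] at hsc1
            -- ⟪GF x, x - xstar⟫ - (F x - F xstar) ≥ μ/2 ‖x - xstar‖²
            have hkey : μ / 2 * ‖x - xstar‖ ^ 2 ≤ ⟪GF x, x - xstar⟫ - (F x - F xstar) := by
              linarith
            have h2L : 0 < 2 / Lmax := by positivity
            have hfactor : (n:ℝ) * ‖x - xstar‖ ^ 2
                - 2 / Lmax * ((n:ℝ) * (μ / 2 * ‖x - xstar‖ ^ 2))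
                = (n:ℝ) * ((1 - μ / Lmax) * ‖x - xstar‖ ^ 2) := by
              field_simp
            nlinarith [mul_le_mul_of_nonneg_left hkey (le_of_lt hnR), hfactor, h2L,
              mul_le_mul_of_nonneg_left
                (mul_le_mul_of_nonneg_left hkey (le_of_lt hnR)) (le_of_lt h2L)]
    -- induction
    intro k
    induction k with
    | zero => simp [hY0]
    | succ k ih =>
      have hsum : ∑ ω : Fin (k+1) → Fin n, ‖Y (k+1) ω - xstar‖ ^ 2
          = ∑ p : Fin n × (Fin k → Fin n),
              ‖Y k p.2 - (2 * (f p.1 (Y k p.2) - fstar p.1) / ‖G p.1 (Y k p.2)‖ ^ 2) •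
                G p.1 (Y k p.2) - xstar‖ ^ 2 := by
        rw [← Fintype.sum_equiv (Fin.snocEquiv (fun _ => Fin n))
          (fun p => ‖Y k p.2 - (2 * (f p.1 (Y k p.2) - fstar p.1) / ‖G p.1 (Y k p.2)‖ ^ 2) •
                G p.1 (Y k p.2) - xstar‖ ^ 2)
          (fun ω => ‖Y (k+1) ω - xstar‖ ^ 2) ?_]
        intro p
        rw [hYstep]
        have hcast : (fun j : Fin k => (Fin.snocEquiv (fun _ => Fin n)) p j.castSucc) = p.2 := by
          funext j
          simp [Fin.snocEquiv, Fin.snoc_castSucc]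
        have hlast : (Fin.snocEquiv (fun _ => Fin n)) p (Fin.last k) = p.1 := by
          simp [Fin.snocEquiv, Fin.snoc_last]
        rw [hcast, hlast]
      have hb : ∑ p : Fin n × (Fin k → Fin n),
            ‖Y k p.2 - (2 * (f p.1 (Y k p.2) - fstar p.1) / ‖G p.1 (Y k p.2)‖ ^ 2) •
              G p.1 (Y k p.2) - xstar‖ ^ 2
          ≤ (n:ℝ) * ((1 - μ / Lmax) * ∑ ω : Fin k → Fin n, ‖Y k ω - xstar‖ ^ 2) := by
        rw [Fintype.sum_prod_type_right]
        calc ∑ ω : Fin k → Fin n, ∑ i : Fin n,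
              ‖Y k ω - (2 * (f i (Y k ω) - fstar i) / ‖G i (Y k ω)‖ ^ 2) •
                G i (Y k ω) - xstar‖ ^ 2
            ≤ ∑ ω : Fin k → Fin n, (n:ℝ) * ((1 - μ / Lmax) * ‖Y k ω - xstar‖ ^ 2) :=
              Finset.sum_le_sum fun ω _ => key (Y k ω)
          _ = (n:ℝ) * ((1 - μ / Lmax) * ∑ ω : Fin k → Fin n, ‖Y k ω - xstar‖ ^ 2) := by
              simp only [Finset.mul_sum]
      rw [hsum]
      have hpow : (0:ℝ) < (n:ℝ) ^ (k+1) := by positivity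
      have hstep2 : (1 / (n:ℝ) ^ (k+1)) * ∑ p : Fin n × (Fin k → Fin n),
            ‖Y k p.2 - (2 * (f p.1 (Y k p.2) - fstar p.1) / ‖G p.1 (Y k p.2)‖ ^ 2) •
              G p.1 (Y k p.2) - xstar‖ ^ 2
          ≤ (1 - μ / Lmax) * ((1 / (n:ℝ) ^ k) * ∑ ω : Fin k → Fin n, ‖Y k ω - xstar‖ ^ 2) := by
        have := mul_le_mul_of_nonneg_left hb (le_of_lt (by positivity : (0:ℝ) < 1 / (n:ℝ) ^ (k+1)))
        calc (1 / (n:ℝ) ^ (k+1)) * _ ≤ (1 / (n:ℝ) ^ (k+1)) *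
              ((n:ℝ) * ((1 - μ / Lmax) * ∑ ω : Fin k → Fin n, ‖Y k ω - xstar‖ ^ 2)) := this
          _ = (1 - μ / Lmax) * ((1 / (n:ℝ) ^ k) * ∑ ω : Fin k → Fin n, ‖Y k ω - xstar‖ ^ 2) := by
              rw [pow_succ]
              field_simp
      calc (1 / (n:ℝ) ^ (k+1)) * ∑ p : Fin n × (Fin k → Fin n),
            ‖Y k p.2 - (2 * (f p.1 (Y k p.2) - fstar p.1) / ‖G p.1 (Y k p.2)‖ ^ 2) •
              G p.1 (Y k p.2) - xstar‖ ^ 2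
          ≤ (1 - μ / Lmax) * ((1 / (n:ℝ) ^ k) * ∑ ω : Fin k → Fin n, ‖Y k ω - xstar‖ ^ 2) :=
            hstep2
        _ ≤ (1 - μ / Lmax) * ((1 - μ / Lmax) ^ k * ‖x0 - xstar‖ ^ 2) :=
            mul_le_mul_of_nonneg_left ih hρ0
        _ = (1 - μ / Lmax) ^ (k+1) * ‖x0 - xstar‖ ^ 2 := by ring
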